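/- Let d ≤ D be positive integers, let ψ, φ : ℝ^d → ℝ^D be arbitrary maps, let K be an n×d real matrix with rows K_1,…,K_n, and let ε > 0. Then there exists a set U ⊆ {1,…,n} with |U| ≤ D/ε such that for every n×d real matrix Q with rows Q_1,…,Q_n and every pair of indices i, j ∈ {1,…,n} with Σ_{ℓ=1}^n ⟨ψ(Q_i), φ(K_ℓ)⟩² > 0, if ⟨ψ(Q_i), φ(K_j)⟩² / Σ_{ℓ=1}^n ⟨ψ(Q_i), φ(K_ℓ)⟩² ≥ ε then j ∈ U. -/

import Mathlib

open Finset RealInnerProductSpace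

/-- Generalized Attention Problem (GAP): for arbitrary feature maps `ψ, φ : ℝ^d → ℝ^D` with
`d ≤ D`, there is a universal set `U ⊆ [n]` of size at most `D/ε` containing, for every query
matrix `Q` and every row `i`, all indices `j` with
`⟨ψ(Q_i), φ(K_j)⟩² / ∑_ℓ ⟨ψ(Q_i), φ(K_ℓ)⟩² ≥ ε`. -/
theorem gap_universal_set {n d D : ℕ} (hd : 0 < d) (hdD : d ≤ D)
    (ψ φ : (Fin d → ℝ) → (Fin D → ℝ))
    (K : Matrix (Fin n) (Fin d) ℝ) (ε : ℝ) (hε : 0 < ε) :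
    ∃ U : Finset (Fin n), (U.card : ℝ) ≤ D / ε ∧
      ∀ (Q : Matrix (Fin n) (Fin d) ℝ) (i j : Fin n),
        0 < (∑ ℓ, (∑ k, ψ (Q i) k * φ (K ℓ) k) ^ 2) →
        ε ≤ (∑ k, ψ (Q i) k * φ (K j) k) ^ 2 / ∑ ℓ, (∑ k, ψ (Q i) k * φ (K ℓ) k) ^ 2 →
        j ∈ U := by
  classical
  -- the linear map x ↦ (ℓ ↦ ⟨x, φ(K ℓ)⟩)
  let T : (Fin D → ℝ) →ₗ[ℝ] EuclideanSpace ℝ (Fin n) :=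
    { toFun := fun x => (WithLp.toLp 2 (fun ℓ => ∑ k, x k * φ (K ℓ) k) : EuclideanSpace ℝ (Fin n))
      map_add' := by
        intro x y
        ext ℓ
        show (∑ k, (x k + y k) * φ (K ℓ) k) = (∑ k, x k * φ (K ℓ) k) + ∑ k, y k * φ (K ℓ) k
        simp [add_mul, Finset.sum_add_distrib]
      map_smul' := by
        intro c x
        ext ℓ
        show (∑ k, (c * x k) * φ (K ℓ) k) = c * ∑ k, x k * φ (K ℓ) k
        simp [Finset.mul_sum, mul_assoc] }
  let S : Submodule ℝ (EuclideanSpace ℝ (Fin n)) := LinearMap.range T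
  let r : ℕ := Module.finrank ℝ S
  have hrD : (r : ℝ) ≤ D := by
    have h1 : r ≤ Module.finrank ℝ (Fin D → ℝ) := LinearMap.finrank_range_le T
    have h2 : Module.finrank ℝ (Fin D → ℝ) = D := Module.finrank_fin_fun ℝ
    exact_mod_cast h1.trans_eq h2
  let b : OrthonormalBasis (Fin r) ℝ S := stdOrthonormalBasis ℝ S
  -- leverage scores
  let τ : Fin n → ℝ := fun j => ∑ k, ((b k : EuclideanSpace ℝ (Fin n)) j) ^ 2
  have hτnonneg : ∀ j, 0 ≤ τ j := fun j => Finset.sum_nonneg fun k _ => sq_nonneg _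
  -- the total leverage score is the rank
  have hτsum : ∑ j, τ j = (r : ℝ) := by
    rw [Finset.sum_comm]
    have key : ∀ k : Fin r, ∑ j, ((b k : EuclideanSpace ℝ (Fin n)) j) ^ 2 = 1 := by
      intro k
      have hkk : ⟪(b k : EuclideanSpace ℝ (Fin n)), (b k : EuclideanSpace ℝ (Fin n))⟫ = 1 := by
        have hON := b.orthonormal
        rw [orthonormal_iff_ite] at hON
        have h := hON k k
        rw [if_pos rfl] at h
        exact h
      have hinner : ⟪(b k : EuclideanSpace ℝ (Fin n)), (b k : EuclideanSpace ℝ (Fin n))⟫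
          = ∑ j, ((b k : EuclideanSpace ℝ (Fin n)) j) ^ 2 := by
        rw [real_inner_self_eq_norm_sq, EuclideanSpace.norm_eq, Real.sq_sqrt (by positivity)]
        simp [Real.norm_eq_abs, sq_abs]
      rw [← hinner, hkk]
    simp_rw [key]
    simp
  refine ⟨Finset.univ.filter fun j => ε ≤ τ j, ?_, ?_⟩
  · -- cardinality bound
    rw [le_div_iff₀ hε]
    calc ((Finset.univ.filter fun j => ε ≤ τ j).card : ℝ) * ε
        = ∑ _j ∈ Finset.univ.filter fun j => ε ≤ τ j, ε := by
          rw [Finset.sum_const, nsmul_eq_mul]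
      _ ≤ ∑ j ∈ Finset.univ.filter fun j => ε ≤ τ j, τ j :=
          Finset.sum_le_sum fun j hj => (Finset.mem_filter.mp hj).2
      _ ≤ ∑ j, τ j := Finset.sum_le_sum_of_subset_of_nonneg (Finset.filter_subset _ _)
          (fun j _ _ => hτnonneg j)
      _ = (r : ℝ) := hτsum
      _ ≤ D := hrD
  · intro Q i j hpos hge
    set y : EuclideanSpace ℝ (Fin n) := T (ψ (Q i)) with hy
    have hyS : y ∈ S := LinearMap.mem_range_self T _
    set c : Fin r → ℝ := fun k => ⟪b k, (⟨y, hyS⟩ : S)⟫ with hc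
    have hrepr : (⟨y, hyS⟩ : S) = ∑ k, c k • b k := by
      simpa [hc, b.repr_apply_apply] using (b.sum_repr (⟨y, hyS⟩ : S)).symm
    have hyrep : y = ∑ k, c k • (b k : EuclideanSpace ℝ (Fin n)) := by
      have := congrArg (Subtype.val) hrepr
      simpa using this
    -- Parseval: ∑ c k ^ 2 = ∑ ℓ, y ℓ ^ 2
    have hParseval : ∑ k, c k ^ 2 = ∑ ℓ, (y ℓ) ^ 2 := by
      have h1 : ⟪(⟨y, hyS⟩ : S), (⟨y, hyS⟩ : S)⟫ = ∑ k, c k * c k := by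
        rw [hrepr]
        simpa using b.orthonormal.inner_sum c c Finset.univ
      have h2 : ⟪(⟨y, hyS⟩ : S), (⟨y, hyS⟩ : S)⟫ = ⟪y, y⟫ := rfl
      have h3 : ⟪y, y⟫ = ∑ ℓ, (y ℓ) ^ 2 := by
        rw [real_inner_self_eq_norm_sq, EuclideanSpace.norm_eq, Real.sq_sqrt (by positivity)]
        simp [Real.norm_eq_abs, sq_abs]
      rw [h2, h3] at h1
      simpa [sq] using h1.symm
    have hyj : y j = ∑ k, c k * (b k : EuclideanSpace ℝ (Fin n)) j := by
      have h1 : y j = ⟪EuclideanSpace.single j (1 : ℝ), y⟫ := by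
        rw [EuclideanSpace.inner_single_left]; simp
      rw [h1, hyrep, inner_sum]
      refine Finset.sum_congr rfl fun k _ => ?_
      rw [real_inner_smul_right, EuclideanSpace.inner_single_left]
      simp
    -- Cauchy–Schwarz
    have hCS : (y j) ^ 2 ≤ (∑ ℓ, (y ℓ) ^ 2) * τ j := by
      rw [hyj, ← hParseval]
      exact Finset.sum_mul_sq_le_sq_mul_sq _ _ _
    -- identify the sums in the statement with y
    have hsame : ∀ ℓ, y ℓ = ∑ k, ψ (Q i) k * φ (K ℓ) k := fun ℓ => rfl
    have hS2 : (∑ ℓ, (∑ k, ψ (Q i) k * φ (K ℓ) k) ^ 2) = ∑ ℓ, (y ℓ) ^ 2 := by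
      simp [hsame]
    rw [hS2] at hpos
    have hge' : ε * (∑ ℓ, (y ℓ) ^ 2) ≤ (y j) ^ 2 := by
      rw [hS2, le_div_iff₀ hpos, ← hsame j] at hge
      exact hge
    have hfin : ε * (∑ ℓ, (y ℓ) ^ 2) ≤ (∑ ℓ, (y ℓ) ^ 2) * τ j := hge'.trans hCS
    rw [mul_comm (∑ ℓ, (y ℓ) ^ 2) (τ j)] at hfin
    have : ε ≤ τ j := le_of_mul_le_mul_right hfin hpos
    simp [Finset.mem_filter, this]
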